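/- Let A be a unital C*-algebra and let V₀, V₁ ∈ A be self-adjoint unitaries such that V₁ − V₀ is invertible in A. Define F := ½·V₀(V₁V₀+1)(V₁V₀−1)⁻¹·s, where s is the positive square root of 2 − V₀V₁ − V₁V₀. Then F is self-adjoint (F* = F), anti-commutes with V₀ (V₀F = −FV₀), and satisfies ‖F‖ ≤ 1. -/

import Mathlib

/-- For self-adjoint unitaries `V₀, V₁` with `V₁ − V₀` invertible, the
bounded transform `F = ½ V₀(V₁V₀+1)(V₁V₀−1)⁻¹ s`, where `s` is the positive square root
of `2 − V₀V₁ − V₁V₀`, is self-adjoint, anti-commutes with `V₀`, and has norm at most 1. -/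
theorem bounded_transform_selfAdjoint_norm {A : Type*} [CStarAlgebra A] [PartialOrder A]
    [StarOrderedRing A]
    (V₀ V₁ : A) (hV₀sa : star V₀ = V₀) (hV₀sq : V₀ ^ 2 = 1)
    (hV₁sa : star V₁ = V₁) (hV₁sq : V₁ ^ 2 = 1)
    (hinv : IsUnit (V₁ - V₀))
    (s : A) (hs : s = CFC.sqrt (2 - V₀ * V₁ - V₁ * V₀))
    (F : A) (hF : F = (1 / 2 : ℂ) • (V₀ * (V₁ * V₀ + 1) * Ring.inverse (V₁ * V₀ - 1) * s)) :
    star F = F ∧ V₀ * F = -(F * V₀) ∧ ‖F‖ ≤ 1 := by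
  have hV₀2 : V₀ * V₀ = 1 := by rw [← sq]; exact hV₀sq
  have hV₁2 : V₁ * V₁ = 1 := by rw [← sq]; exact hV₁sq
  have cV₀ : ∀ c : A, V₀ * (V₀ * c) = c := fun c => by rw [← mul_assoc, hV₀2, one_mul]
  have cV₁ : ∀ c : A, V₁ * (V₁ * c) = c := fun c => by rw [← mul_assoc, hV₁2, one_mul]
  set u : A := V₁ * V₀ with hu
  set x : A := 2 - V₀ * V₁ - V₁ * V₀ with hx
  have hsu : star u = V₀ * V₁ := by rw [hu, star_mul, hV₀sa, hV₁sa]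
  have h1 : u * star u = 1 := by
    rw [hsu, hu]; simp only [mul_assoc, cV₀]; exact hV₁2
  have h2 : star u * u = 1 := by
    rw [hsu, hu]; simp only [mul_assoc, cV₁]; exact hV₀2
  have hxnn : (0:A) ≤ x := by
    have e : x = (V₀ - V₁) * star (V₀ - V₁) := by
      rw [star_sub, hV₀sa, hV₁sa, hx]
      have h : (V₀ - V₁) * (V₀ - V₁) = (V₀ * V₀ + V₁ * V₁) - V₀ * V₁ - V₁ * V₀ := by
        noncomm_ring
      rw [h, hV₀2, hV₁2, one_add_one_eq_two]
    rw [e]; exact mul_star_self_nonneg _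
  have hs0 : (0:A) ≤ s := hs ▸ CFC.sqrt_nonneg x
  have hssa : star s = s := IsSelfAdjoint.of_nonneg hs0
  have hs2 : s * s = x := by rw [hs]; exact CFC.sqrt_mul_sqrt_self x hxnn
  -- elements conjugating `x` to itself commute with `s`
  have key : ∀ V : A, V * V = 1 → star V = V → V * x * V = x → V * s = s * V := by
    intro V hVV hVsa hVx
    have hpos : (0:A) ≤ V * s * V := by
      have := star_left_conjugate_nonneg hs0 V
      rwa [hVsa] at this
    have hsq : (V * s * V) * (V * s * V) = x := by
      calc (V * s * V) * (V * s * V) = V * (s * ((V * V) * (s * V))) := by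
            simp only [mul_assoc]
        _ = V * (s * s) * V := by rw [hVV, one_mul]; simp only [mul_assoc]
        _ = x := by rw [hs2, hVx]
    have h4 : s = V * s * V := hs.trans (CFC.sqrt_unique hsq hpos)
    calc V * s = V * (V * s * V) := by conv_lhs => rw [h4]
      _ = (V * V) * (s * V) := by simp only [mul_assoc]
      _ = s * V := by rw [hVV, one_mul]
  have hV₀x : V₀ * x * V₀ = x := by
    rw [hx]
    have h : V₀ * (2 - V₀ * V₁ - V₁ * V₀) * V₀
        = 2 * (V₀ * V₀) - V₀ * (V₀ * (V₁ * V₀)) - (V₀ * V₁) * (V₀ * V₀) := by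
      noncomm_ring
    rw [h, hV₀2, cV₀, mul_one, mul_one]
    noncomm_ring
  have hV₁x : V₁ * x * V₁ = x := by
    rw [hx]
    have h : V₁ * (2 - V₀ * V₁ - V₁ * V₀) * V₁
        = 2 * (V₁ * V₁) - (V₁ * V₀) * (V₁ * V₁) - V₁ * (V₁ * (V₀ * V₁)) := by
      noncomm_ring
    rw [h, hV₁2, cV₁, mul_one, mul_one]
    noncomm_ring
  have hsV₀ : V₀ * s = s * V₀ := key V₀ hV₀2 hV₀sa hV₀x
  have hsV₁ : V₁ * s = s * V₁ := key V₁ hV₁2 hV₁sa hV₁x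
  have hus : u * s = s * u := by
    rw [hu, mul_assoc, hsV₀, ← mul_assoc, hsV₁, mul_assoc]
  have hstus : star u * s = s * star u := by
    rw [hsu, mul_assoc, hsV₁, ← mul_assoc, hsV₀, mul_assoc]
  -- the inverse w
  have hV₀unit : IsUnit V₀ := ⟨⟨V₀, V₀, hV₀2, hV₀2⟩, rfl⟩
  have hu1unit : IsUnit (u - 1) := by
    have e : u - 1 = (V₁ - V₀) * V₀ := by rw [sub_mul, hV₀2, hu]
    rw [e]; exact hinv.mul hV₀unit
  set w : A := Ring.inverse (u - 1) with hwdef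
  have hw1 : w * (u - 1) = 1 := Ring.inverse_mul_cancel _ hu1unit
  have hw2 : (u - 1) * w = 1 := Ring.mul_inverse_cancel _ hu1unit
  have hcommw : ∀ a : A, a * (u - 1) = (u - 1) * a → a * w = w * a := by
    intro a h
    calc a * w = (w * (u - 1)) * (a * w) := by rw [hw1, one_mul]
      _ = w * ((u - 1) * a * w) := by simp only [mul_assoc]
      _ = w * (a * ((u - 1) * w)) := by rw [← h]; simp only [mul_assoc]
      _ = w * a := by rw [hw2, mul_one]
  have hsw : s * w = w * s := hcommw s (by rw [mul_sub, sub_mul, mul_one, one_mul, hus])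
  have huw : u * w = w * u := hcommw u (by noncomm_ring)
  have hstuw : star u * w = w * star u :=
    hcommw (star u) (by rw [mul_sub, sub_mul, mul_one, one_mul, sub_left_inj, h1, h2])
  -- the inverse w'
  have hsu1unit : IsUnit (star u - 1) := by
    have e : star u - 1 = star (u - 1) := by rw [star_sub, star_one]
    rw [e]; exact hu1unit.star
  set w' : A := Ring.inverse (star u - 1) with hw'def
  have hw'1 : w' * (star u - 1) = 1 := Ring.inverse_mul_cancel _ hsu1unit
  have hw'2 : (star u - 1) * w' = 1 := Ring.mul_inverse_cancel _ hsu1unit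
  have hstarw : star w = w' := by
    rw [hwdef, hw'def, ← Ring.inverse_star, star_sub, star_one]
  have hcommw' : ∀ a : A, a * (star u - 1) = (star u - 1) * a → a * w' = w' * a := by
    intro a h
    calc a * w' = (w' * (star u - 1)) * (a * w') := by rw [hw'1, one_mul]
      _ = w' * ((star u - 1) * a * w') := by simp only [mul_assoc]
      _ = w' * (a * ((star u - 1) * w')) := by rw [← h]; simp only [mul_assoc]
      _ = w' * a := by rw [hw'2, mul_one]
  have hstuw' : star u * w' = w' * star u := hcommw' (star u) (by noncomm_ring)
  -- conjugation facts
  have hconju : V₀ * u * V₀ = star u := by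
    rw [hsu, hu, mul_assoc, mul_assoc, hV₀2, mul_one]
  have hconju1 : V₀ * (u + 1) * V₀ = star u + 1 := by
    have h : V₀ * (u + 1) * V₀ = V₀ * u * V₀ + V₀ * V₀ := by noncomm_ring
    rw [h, hconju, hV₀2]
  have hconjw : V₀ * w * V₀ = w' := by
    have e : star u - 1 = V₀ * (u - 1) * V₀ := by
      have h : V₀ * (u - 1) * V₀ = V₀ * u * V₀ - V₀ * V₀ := by noncomm_ring
      rw [h, hconju, hV₀2]
    have hh : (V₀ * w * V₀) * (star u - 1) = 1 := by
      rw [e]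
      calc (V₀ * w * V₀) * (V₀ * (u - 1) * V₀)
          = V₀ * (w * ((V₀ * V₀) * ((u - 1) * V₀))) := by simp only [mul_assoc]
        _ = V₀ * ((w * (u - 1)) * V₀) := by rw [hV₀2, one_mul]; simp only [mul_assoc]
        _ = 1 := by rw [hw1, one_mul, hV₀2]
    calc V₀ * w * V₀ = (V₀ * w * V₀) * ((star u - 1) * w') := by rw [hw'2, mul_one]
      _ = ((V₀ * w * V₀) * (star u - 1)) * w' := by simp only [mul_assoc]
      _ = w' := by rw [hh, one_mul]
  -- the key identity
  have hkey : (star u + 1) * w' = -((u + 1) * w) := by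
    have e : star u - 1 = -(star u * (u - 1)) := by
      rw [mul_sub, h2, mul_one, neg_sub]
    have h : (-((u + 1) * w)) * (star u - 1) = star u + 1 := by
      rw [e, neg_mul_neg]
      calc (u + 1) * w * (star u * (u - 1))
          = (u + 1) * ((w * star u) * (u - 1)) := by simp only [mul_assoc]
        _ = (u + 1) * (star u * (w * (u - 1))) := by rw [← hstuw]; simp only [mul_assoc]
        _ = (u + 1) * star u := by rw [hw1, mul_one]
        _ = star u + 1 := by rw [add_mul, one_mul, h1, add_comm]
    calc (star u + 1) * w' = ((-((u + 1) * w)) * (star u - 1)) * w' := by rw [h]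
      _ = (-((u + 1) * w)) * ((star u - 1) * w') := by simp only [mul_assoc]
      _ = -((u + 1) * w) := by rw [hw'2, mul_one]
  have hkey' : w' * (star u + 1) = -((u + 1) * w) := by
    rw [← hkey, mul_add, add_mul, mul_one, one_mul, hstuw']
  -- core conjugation
  have hcore : V₀ * ((u + 1) * w) * V₀ = -((u + 1) * w) := by
    calc V₀ * ((u + 1) * w) * V₀
        = (V₀ * (u + 1) * V₀) * (V₀ * (w * V₀)) := by simp only [mul_assoc, cV₀]
      _ = (star u + 1) * w' := by rw [hconju1, ← mul_assoc V₀ w V₀, hconjw]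
      _ = -((u + 1) * w) := hkey
  -- s commutes with (u+1)*w
  have hsuw : s * ((u + 1) * w) = (u + 1) * w * s := by
    have h : s * (u + 1) = (u + 1) * s := by
      rw [mul_add, add_mul, mul_one, one_mul, hus]
    rw [← mul_assoc, h, mul_assoc, hsw, ← mul_assoc]
  have hwu1 : w * (u + 1) = (u + 1) * w := by
    rw [mul_add, add_mul, mul_one, one_mul, huw]
  -- self-adjointness
  have hr0 : V₀ * (u + 1) * w * s = -((u + 1) * w * s * V₀) := by
    calc V₀ * (u + 1) * w * s
        = (V₀ * ((u + 1) * w) * V₀) * (V₀ * s) := by simp only [mul_assoc, cV₀]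
      _ = -((u + 1) * w) * (s * V₀) := by rw [hcore, hsV₀]
      _ = -((u + 1) * w * s * V₀) := by simp only [neg_mul, mul_assoc]
  have hFsa : star F = F := by
    rw [hF, star_smul, star_mul, star_mul, star_mul, hssa, hstarw, star_add, star_one, hV₀sa]
    have hc : star (1/2 : ℂ) = (1/2 : ℂ) := by norm_num
    rw [hc]
    congr 1
    rw [hr0]
    calc s * (w' * ((star u + 1) * V₀)) = s * (w' * (star u + 1)) * V₀ := by
          simp only [mul_assoc]
      _ = s * -((u + 1) * w) * V₀ := by rw [hkey']
      _ = -(s * ((u + 1) * w) * V₀) := by simp only [mul_neg, neg_mul]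
      _ = -((u + 1) * w * s * V₀) := by rw [hsuw]
  -- anticommutation
  have hanti : V₀ * F = -(F * V₀) := by
    rw [hF, mul_smul_comm, smul_mul_assoc, ← smul_neg]
    congr 1
    have hl : V₀ * (V₀ * (u + 1) * w * s) = (u + 1) * w * s := by
      simp only [mul_assoc, cV₀]
    have hr : V₀ * (u + 1) * w * s * V₀ = -((u + 1) * w * s) := by
      calc V₀ * (u + 1) * w * s * V₀
          = V₀ * ((u + 1) * (w * (s * V₀))) := by simp only [mul_assoc]
        _ = V₀ * ((u + 1) * (w * (V₀ * s))) := by rw [hsV₀]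
        _ = (V₀ * ((u + 1) * w) * V₀) * s := by simp only [mul_assoc, cV₀]
        _ = -((u + 1) * w) * s := by rw [hcore]
        _ = -((u + 1) * w * s) := by rw [neg_mul]
    rw [hr, neg_neg, hl]
  refine ⟨hFsa, hanti, ?_⟩
  rcases subsingleton_or_nontrivial A with hA | hA
  · rw [Subsingleton.elim F 0, norm_zero]; norm_num
  haveI := hA
  -- computation of F * F
  have hsquw : s * (V₀ * ((u + 1) * w)) = V₀ * ((u + 1) * w) * s := by
    calc s * (V₀ * ((u + 1) * w)) = (s * V₀) * ((u + 1) * w) := by rw [← mul_assoc]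
      _ = V₀ * (s * ((u + 1) * w)) := by rw [← hsV₀, mul_assoc]
      _ = V₀ * ((u + 1) * w * s) := by rw [hsuw]
      _ = V₀ * ((u + 1) * w) * s := by simp only [mul_assoc]
  have hx2 : x = 2 - star u - u := by rw [hx, hsu, hu]
  have e : x = -((u - 1) * ((u - 1) * star u)) := by
    have h : (u - 1) * ((u - 1) * star u)
        = u * (u * star u) - (u * star u) - (u * star u) + star u := by noncomm_ring
    rw [hx2, h, h1, mul_one, show (2:A) = 1 + 1 from one_add_one_eq_two.symm]
    abel
  have hwwx : w * (w * x) = -(star u) := by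
    calc w * (w * x) = w * (w * -((u - 1) * ((u - 1) * star u))) := by rw [← e]
      _ = -(w * ((w * (u - 1)) * ((u - 1) * star u))) := by simp only [mul_neg, mul_assoc]
      _ = -(w * ((u - 1) * star u)) := by rw [hw1, one_mul]
      _ = -((w * (u - 1)) * star u) := by rw [← mul_assoc]
      _ = -(star u) := by rw [hw1, one_mul]
  have haa : (V₀ * (u + 1) * w * s) * (V₀ * (u + 1) * w * s)
      = (u + 1) * ((u + 1) * star u) := by
    calc (V₀ * (u + 1) * w * s) * (V₀ * (u + 1) * w * s)
        = V₀ * ((u + 1) * w) * (s * (V₀ * ((u + 1) * w))) * s := by simp only [mul_assoc]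
      _ = V₀ * ((u + 1) * w) * (V₀ * ((u + 1) * w) * s) * s := by rw [hsquw]
      _ = (V₀ * ((u + 1) * w) * V₀) * ((u + 1) * (w * (s * s))) := by simp only [mul_assoc]
      _ = -((u + 1) * w) * ((u + 1) * (w * x)) := by rw [hcore, hs2]
      _ = -((u + 1) * (w * ((u + 1) * (w * x)))) := by simp only [neg_mul, mul_assoc]
      _ = -((u + 1) * ((u + 1) * (w * (w * x)))) := by
          rw [← mul_assoc w (u + 1) (w * x), hwu1, mul_assoc]
      _ = -((u + 1) * ((u + 1) * -(star u))) := by rw [hwwx]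
      _ = (u + 1) * ((u + 1) * star u) := by simp only [mul_neg, neg_neg]
  have hFF : F * F = (1/4 : ℂ) • ((u + 1) * ((u + 1) * star u)) := by
    rw [hF, smul_mul_assoc, mul_smul_comm, smul_smul, haa]
    norm_num
  have hnu : ‖u‖ = 1 := by
    have h : ‖u‖ * ‖u‖ = 1 := by rw [← CStarRing.norm_star_mul_self, h2, norm_one]
    nlinarith [norm_nonneg u]
  have h1n : ‖u + 1‖ ≤ 2 := by
    calc ‖u + 1‖ ≤ ‖u‖ + ‖(1 : A)‖ := norm_add_le _ _
      _ = 2 := by rw [hnu, norm_one]; norm_num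
  have h2n : ‖star u‖ = 1 := by rw [norm_star, hnu]
  have hbound : ‖(u + 1) * ((u + 1) * star u)‖ ≤ 4 := by
    have t2 : ‖(u + 1) * star u‖ ≤ 2 := by
      calc ‖(u + 1) * star u‖ ≤ ‖u + 1‖ * ‖star u‖ := norm_mul_le _ _
        _ = ‖u + 1‖ := by rw [h2n, mul_one]
        _ ≤ 2 := h1n
    calc ‖(u + 1) * ((u + 1) * star u)‖ ≤ ‖u + 1‖ * ‖(u + 1) * star u‖ := norm_mul_le _ _
      _ ≤ 2 * 2 := mul_le_mul h1n t2 (norm_nonneg _) (by norm_num)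
      _ = 4 := by norm_num
  have hFn : ‖F‖ * ‖F‖ ≤ 1 := by
    have h : ‖F‖ * ‖F‖ = ‖F * F‖ := by rw [← CStarRing.norm_star_mul_self, hFsa]
    rw [h, hFF, norm_smul]
    have hc4 : ‖(1/4 : ℂ)‖ = 1/4 := by norm_num
    rw [hc4]
    linarith
  exact (abs_le.mp (abs_le_one_iff_mul_self_le_one.mpr hFn)).2
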